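/- arXiv:2402.03157 — 3 statements merged into one kernel-verified Lean document; each statement's English description precedes it below -/
import Mathlib

section
/- Suppose for each player i ∈ {1,…,N} there is a C¹ costate function ψ_i : [0,T] → ℝⁿ, a continuous control profile u* and a C¹ trajectory x* such that for all t ∈ [0,T]: ẋ*(t) = f(x*(t),u*(t)) with x*(0)=x₀; ∇_{u_i} H_i(ψ_i(t), x*(t), u*(t)) = 0; ψ̇_i(t) = −∇_x H_i(ψ_i(t), x*(t), u*(t)); and ψ_i(T) = ∇_x h_i(x*(T)). Assume additionally that each h_i is convex and that for each i and each t ∈ [0,T] the map (x, u_i) ↦ H_i(ψ_i(t), x, (u_i, u*_{¬i}(t))) is convex on ℝⁿ × ℝ^{m_i}. Then u* is an open-loop Nash equilibrium of the differential game. -/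
/- STATEMENT 1: Sufficiency of the Minimum Principle: if C¹ costates, a continuous control
profile and a C¹ trajectory satisfy the state equation, stationarity, the costate equation and
transversality, and if each terminal cost hᵢ is convex and each map
(x,uᵢ) ↦ Hᵢ(ψᵢ(t),x,(uᵢ,u*₋ᵢ(t))) is convex, then u* is an open-loop Nash equilibrium. -/

open scoped RealInnerProductSpace
open Set

noncomputable section

open scoped RealInnerProductSpace in
lemma subgrad_flat {E : Type*} [NormedAddCommGroup E] [NormedSpace ℝ E]
    {φ : E → ℝ} (hc : ConvexOn ℝ Set.univ φ) {x z : E} {L : E →L[ℝ] ℝ}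
    (hL : HasFDerivAt φ L x) : φ x + L (z - x) ≤ φ z := by
  set c : ℝ →ᵃ[ℝ] E := AffineMap.lineMap x z with hcdef
  have hα : ConvexOn ℝ Set.univ (φ ∘ c) := by
    simpa using hc.comp_affineMap c
  have hcurve : HasDerivAt (fun s : ℝ => c s) (z - x) 0 := by
    have : HasDerivAt (fun s : ℝ => s • (z - x) + x) ((1 : ℝ) • (z - x)) 0 :=
      ((hasDerivAt_id (0:ℝ)).smul_const (z - x)).add_const x
    simpa [hcdef, AffineMap.lineMap_apply] using this
  have hc0 : c 0 = x := by simp [hcdef]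
  have hderiv : HasDerivAt (φ ∘ c) (L (z - x)) 0 := by
    have := (hc0 ▸ hL).comp_hasDerivAt 0 hcurve
    simpa using this
  have := hα.le_slope_of_hasDerivAt (Set.mem_univ 0) (Set.mem_univ 1) zero_lt_one hderiv
  have h1 : φ (c 1) = φ z := by simp [hcdef]
  have h0 : φ (c 0) = φ x := by simp [hcdef]
  have hLsub : L (z - x) = L z - L x := map_sub L z x
  rw [slope_def_field] at this
  simp only [Function.comp_apply, h1, h0] at this
  have := this
  simp only [div_one, sub_zero] at this
  linarith

open scoped RealInnerProductSpace in
lemma subgrad_gradient {E : Type*} [NormedAddCommGroup E] [InnerProductSpace ℝ E] [CompleteSpace E]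
    {φ : E → ℝ} (hc : ConvexOn ℝ Set.univ φ) {x z g : E}
    (hg : HasGradientAt φ g x) : φ x + ⟪g, z - x⟫ ≤ φ z := by
  simpa [InnerProductSpace.toDual_apply_apply] using subgrad_flat hc hg.hasFDerivAt (z := z)

theorem statement_1
    (n N : ℕ) (m : Fin N → ℕ) (T : ℝ) (hT : 0 < T)
    (x₀ : EuclideanSpace ℝ (Fin n))
    -- input-affine dynamics: f(x,u) = fx(x) + ∑ i, G i x (u i)
    (fx : EuclideanSpace ℝ (Fin n) → EuclideanSpace ℝ (Fin n))
    (hfx : ContDiff ℝ 1 fx)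
    (G : (i : Fin N) → EuclideanSpace ℝ (Fin n) →
      (EuclideanSpace ℝ (Fin (m i)) →L[ℝ] EuclideanSpace ℝ (Fin n)))
    (hG : ∀ i, ContDiff ℝ 1 (G i))
    (f : EuclideanSpace ℝ (Fin n) → ((j : Fin N) → EuclideanSpace ℝ (Fin (m j))) →
      EuclideanSpace ℝ (Fin n))
    (hf : ∀ x u, f x u = fx x + ∑ i, G i x (u i))
    -- running costs g i (x,uᵢ) = q i x + uᵢᵀ Rᵢ uᵢ with Rᵢ symmetric positive definite
    (q : Fin N → EuclideanSpace ℝ (Fin n) → ℝ) (hq : ∀ i, ContDiff ℝ 1 (q i))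
    (R : (i : Fin N) →
      (EuclideanSpace ℝ (Fin (m i)) →L[ℝ] EuclideanSpace ℝ (Fin (m i))))
    (hRsymm : ∀ i v w, ⟪R i v, w⟫ = ⟪v, R i w⟫)
    (hRpos : ∀ i v, v ≠ 0 → (0:ℝ) < ⟪v, R i v⟫)
    (g : (i : Fin N) → EuclideanSpace ℝ (Fin n) → EuclideanSpace ℝ (Fin (m i)) → ℝ)
    (hg : ∀ i x v, g i x v = q i x + ⟪v, R i v⟫)
    -- terminal costs
    (h : Fin N → EuclideanSpace ℝ (Fin n) → ℝ) (hh : ∀ i, ContDiff ℝ 1 (h i))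
    -- total cost of player i along a state trajectory and a control profile
    (J : (i : Fin N) → (ℝ → EuclideanSpace ℝ (Fin n)) →
      ((j : Fin N) → ℝ → EuclideanSpace ℝ (Fin (m j))) → ℝ)
    (hJ : ∀ i x u, J i x u = h i (x T) + ∫ t in (0:ℝ)..T, g i (x t) (u i t))
    -- Hamiltonians
    (H : (i : Fin N) → EuclideanSpace ℝ (Fin n) → EuclideanSpace ℝ (Fin n) →
      ((j : Fin N) → EuclideanSpace ℝ (Fin (m j))) → ℝ)
    (hH : ∀ i ψ x u, H i ψ x u = g i x (u i) + ⟪ψ, f x u⟫)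
    -- candidate equilibrium: continuous controls and a C¹ state trajectory
    (ustar : (j : Fin N) → ℝ → EuclideanSpace ℝ (Fin (m j)))
    (hustar : ∀ j, Continuous (ustar j))
    (xstar : ℝ → EuclideanSpace ℝ (Fin n)) (hxstar : ContDiff ℝ 1 xstar)
    (hx0 : xstar 0 = x₀)
    (hdyn : ∀ t ∈ Icc (0:ℝ) T, deriv xstar t = f (xstar t) (fun j => ustar j t))
    -- C¹ costates satisfying the minimum-principle conditions
    (ψ : (i : Fin N) → ℝ → EuclideanSpace ℝ (Fin n))
    (hψ : ∀ i, ContDiff ℝ 1 (ψ i))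
    (hstat : ∀ i, ∀ t ∈ Icc (0:ℝ) T,
      gradient (fun v => H i (ψ i t) (xstar t) (Function.update (fun j => ustar j t) i v))
        (ustar i t) = 0)
    (hcostate : ∀ i, ∀ t ∈ Icc (0:ℝ) T,
      deriv (ψ i) t = - gradient (fun y => H i (ψ i t) y (fun j => ustar j t)) (xstar t))
    (htrans : ∀ i, ψ i T = gradient (h i) (xstar T))
    -- convexity assumptions
    (hconv_h : ∀ i, ConvexOn ℝ Set.univ (h i))
    (hconv_H : ∀ i, ∀ t ∈ Icc (0:ℝ) T,
      ConvexOn ℝ Set.univ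
        (fun p : EuclideanSpace ℝ (Fin n) × EuclideanSpace ℝ (Fin (m i)) =>
          H i (ψ i t) p.1 (Function.update (fun j => ustar j t) i p.2))) :
    -- conclusion: u* is an open-loop Nash equilibrium
    ∀ i : Fin N, ∀ ui : ℝ → EuclideanSpace ℝ (Fin (m i)), Continuous ui →
      ∀ y : ℝ → EuclideanSpace ℝ (Fin n), ContDiff ℝ 1 y → y 0 = x₀ →
      (∀ t ∈ Icc (0:ℝ) T,
        deriv y t = f (y t) (Function.update (fun j => ustar j t) i (ui t))) →
      J i xstar ustar ≤ J i y (Function.update ustar i ui) := by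

  classical
  intro i ui hui y hy hy0 hydyn
  -- expansion of the Hamiltonian as an explicit smooth expression
  have hFexp : ∀ (t : ℝ) (a : EuclideanSpace ℝ (Fin n)) (v : EuclideanSpace ℝ (Fin (m i))),
      H i (ψ i t) a (Function.update (fun j => ustar j t) i v)
        = q i a + ⟪v, R i v⟫
          + ⟪ψ i t, fx a + (G i a v + ∑ j ∈ Finset.univ.erase i, G j a (ustar j t))⟫ := by
    intro t a v
    rw [hH, hg, hf, Function.update_self]
    have hsum : ∑ j, G j a (Function.update (fun j' => ustar j' t) i v j)
        = G i a v + ∑ j ∈ Finset.univ.erase i, G j a (ustar j t) := by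
      rw [← Finset.add_sum_erase _ (fun j => G j a (Function.update (fun j' => ustar j' t) i v j))
        (Finset.mem_univ i)]
      congr 1
      · rw [Function.update_self]
      · exact Finset.sum_congr rfl fun j hj => by
          rw [Function.update_of_ne (Finset.ne_of_mem_erase hj)]
    rw [hsum]
  have hFsmooth : ∀ t : ℝ, ContDiff ℝ 1
      (fun p : EuclideanSpace ℝ (Fin n) × EuclideanSpace ℝ (Fin (m i)) =>
        q i p.1 + ⟪p.2, R i p.2⟫
          + ⟪ψ i t, fx p.1 + (G i p.1 p.2 + ∑ j ∈ Finset.univ.erase i, G j p.1 (ustar j t))⟫) := by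
    intro t
    refine ContDiff.add (ContDiff.add ?_ ?_) ?_
    · exact (hq i).comp contDiff_fst
    · exact contDiff_snd.inner ℝ ((R i).contDiff.comp contDiff_snd)
    · refine contDiff_const.inner ℝ ?_
      refine (hfx.comp contDiff_fst).add (ContDiff.add ?_ ?_)
      · exact ((hG i).comp contDiff_fst).clm_apply contDiff_snd
      · exact ContDiff.sum fun j hj => ((hG j).comp contDiff_fst).clm_apply contDiff_const
  -- the key pointwise inequality
  have key : ∀ t ∈ Icc (0:ℝ) T,
      g i (xstar t) (ustar i t) ≤ g i (y t) (ui t)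
        + (⟪deriv (ψ i) t, y t - xstar t⟫ + ⟪ψ i t, deriv y t - deriv xstar t⟫) := by
    intro t ht
    set F : EuclideanSpace ℝ (Fin n) × EuclideanSpace ℝ (Fin (m i)) → ℝ :=
      fun p => H i (ψ i t) p.1 (Function.update (fun j => ustar j t) i p.2) with hF
    have hFc : ContDiff ℝ 1 F := by
      have hfe : F = (fun p : EuclideanSpace ℝ (Fin n) × EuclideanSpace ℝ (Fin (m i)) =>
          q i p.1 + ⟪p.2, R i p.2⟫
            + ⟪ψ i t, fx p.1 + (G i p.1 p.2 + ∑ j ∈ Finset.univ.erase i, G j p.1 (ustar j t))⟫) :=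
        funext fun p => hFexp t p.1 p.2
      rw [hfe]; exact hFsmooth t
    have hFdiffAt : ∀ p, HasFDerivAt F (fderiv ℝ F p) p :=
      fun p => ((hFc.differentiable one_ne_zero) p).hasFDerivAt
    set pstar : EuclideanSpace ℝ (Fin n) × EuclideanSpace ℝ (Fin (m i)) :=
      (xstar t, ustar i t) with hpstar
    set L := fderiv ℝ F pstar with hLdef
    -- x-partial derivative
    have hFxemb : HasFDerivAt (fun a => F (a, ustar i t))
        (L.comp (ContinuousLinearMap.inl ℝ _ _)) (xstar t) :=
      by have := (hFdiffAt pstar).comp (xstar t) (hasFDerivAt_prodMk_left (𝕜 := ℝ) (xstar t) (ustar i t)); exact this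
    have hFxfun : (fun a => F (a, ustar i t))
        = fun a => H i (ψ i t) a (fun j => ustar j t) := by
      funext a
      show H i (ψ i t) a (Function.update (fun j => ustar j t) i (ustar i t)) = _
      rw [Function.update_eq_self]
    rw [hFxfun] at hFxemb
    have hgradx : gradient (fun a => H i (ψ i t) a (fun j => ustar j t)) (xstar t)
        = -(deriv (ψ i) t) := by
      rw [hcostate i t ht, neg_neg]
    have hFxgrad : HasFDerivAt (fun a => H i (ψ i t) a (fun j => ustar j t))
        (InnerProductSpace.toDual ℝ _ (-(deriv (ψ i) t))) (xstar t) := by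
      rw [← hgradx]
      exact (hFxemb.differentiableAt.hasGradientAt).hasFDerivAt
    have hxpart : ∀ v : EuclideanSpace ℝ (Fin n),
        L (v, (0:EuclideanSpace ℝ (Fin (m i)))) = ⟪-(deriv (ψ i) t), v⟫ := by
      intro v
      have huniq : L.comp (ContinuousLinearMap.inl ℝ _ _)
          = InnerProductSpace.toDual ℝ _ (-(deriv (ψ i) t)) := hFxemb.unique hFxgrad
      calc L (v, (0:EuclideanSpace ℝ (Fin (m i))))
          = (L.comp (ContinuousLinearMap.inl ℝ _ _)) v := rfl
        _ = ⟪-(deriv (ψ i) t), v⟫ := by rw [huniq]; exact InnerProductSpace.toDual_apply_apply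
    -- u-partial derivative
    have hFuemb : HasFDerivAt (fun v => F (xstar t, v))
        (L.comp (ContinuousLinearMap.inr ℝ _ _)) (ustar i t) :=
      (hFdiffAt pstar).comp (ustar i t) (hasFDerivAt_prodMk_right (𝕜 := ℝ) (xstar t) (ustar i t))
    have hgradu : gradient (fun v => F (xstar t, v)) (ustar i t) = 0 := hstat i t ht
    have hFugrad : HasFDerivAt (fun v => F (xstar t, v))
        (InnerProductSpace.toDual ℝ _ (0 : EuclideanSpace ℝ (Fin (m i)))) (ustar i t) := by
      rw [← hgradu]
      exact (hFuemb.differentiableAt.hasGradientAt).hasFDerivAt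
    have hupart : ∀ w : EuclideanSpace ℝ (Fin (m i)),
        L ((0:EuclideanSpace ℝ (Fin n)), w) = 0 := by
      intro w
      have huniq : L.comp (ContinuousLinearMap.inr ℝ _ _)
          = InnerProductSpace.toDual ℝ _ (0 : EuclideanSpace ℝ (Fin (m i))) :=
        hFuemb.unique hFugrad
      calc L ((0:EuclideanSpace ℝ (Fin n)), w)
          = (L.comp (ContinuousLinearMap.inr ℝ _ _)) w := rfl
        _ = ⟪(0 : EuclideanSpace ℝ (Fin (m i))), w⟫ := by
            rw [huniq]; exact InnerProductSpace.toDual_apply_apply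
        _ = 0 := inner_zero_left w
    -- subgradient inequality for the joint convex map
    have hconv : ConvexOn ℝ Set.univ F := hconv_H i t ht
    have hsub := subgrad_flat hconv (hFdiffAt pstar) (z := (y t, ui t))
    have hLsplit : L ((y t, ui t) - pstar) = ⟪-(deriv (ψ i) t), y t - xstar t⟫ := by
      have hsplit : (y t, ui t) - pstar
          = ((y t - xstar t, (0:EuclideanSpace ℝ (Fin (m i))))
            + ((0:EuclideanSpace ℝ (Fin n)), ui t - ustar i t)) := by
        rw [hpstar]; ext <;> simp
      rw [hsplit, map_add, hxpart, hupart, add_zero]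
    have hFz : F (y t, ui t) = g i (y t) (ui t) + ⟪ψ i t, deriv y t⟫ := by
      show H i (ψ i t) (y t) (Function.update (fun j => ustar j t) i (ui t)) = _
      rw [hH, Function.update_self, ← hydyn t ht]
    have hFstar : F pstar = g i (xstar t) (ustar i t) + ⟪ψ i t, deriv xstar t⟫ := by
      show H i (ψ i t) (xstar t) (Function.update (fun j => ustar j t) i (ustar i t)) = _
      rw [Function.update_eq_self, hH, ← hdyn t ht]
    rw [hFz, hFstar, hLsplit] at hsub
    have e1 : ⟪-(deriv (ψ i) t), y t - xstar t⟫ = -⟪deriv (ψ i) t, y t - xstar t⟫ :=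
      inner_neg_left _ _
    have e2 : ⟪ψ i t, deriv y t - deriv xstar t⟫
        = ⟪ψ i t, deriv y t⟫ - ⟪ψ i t, deriv xstar t⟫ := inner_sub_right _ _ _
    linarith
  -- continuity and integrability
  have hcg_star : Continuous fun t => g i (xstar t) (ustar i t) := by
    have : (fun t => g i (xstar t) (ustar i t))
        = fun t => q i (xstar t) + ⟪ustar i t, R i (ustar i t)⟫ := funext fun t => hg i _ _
    rw [this]
    exact ((hq i).continuous.comp hxstar.continuous).add
      ((hustar i).inner ((R i).continuous.comp (hustar i)))
  have hcg_y : Continuous fun t => g i (y t) (ui t) := by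
    have : (fun t => g i (y t) (ui t))
        = fun t => q i (y t) + ⟪ui t, R i (ui t)⟫ := funext fun t => hg i _ _
    rw [this]
    exact ((hq i).continuous.comp hy.continuous).add (hui.inner ((R i).continuous.comp hui))
  have hΦ'cont : Continuous fun t =>
      ⟪deriv (ψ i) t, y t - xstar t⟫ + ⟪ψ i t, deriv y t - deriv xstar t⟫ := by
    exact (((hψ i).continuous_deriv le_rfl).inner (hy.continuous.sub hxstar.continuous)).add
      (((hψ i).continuous.inner ((hy.continuous_deriv le_rfl).sub
        (hxstar.continuous_deriv le_rfl))))
  have hΦderiv : ∀ t ∈ uIcc (0:ℝ) T, HasDerivAt (fun s => ⟪ψ i s, y s - xstar s⟫)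
      (⟪deriv (ψ i) t, y t - xstar t⟫ + ⟪ψ i t, deriv y t - deriv xstar t⟫) t := by
    intro t _
    have h1 : HasDerivAt (ψ i) (deriv (ψ i) t) t :=
      ((hψ i).differentiable one_ne_zero t).hasDerivAt
    have h2 : HasDerivAt (fun s => y s - xstar s) (deriv y t - deriv xstar t) t :=
      ((hy.differentiable one_ne_zero t).hasDerivAt).sub ((hxstar.differentiable one_ne_zero t).hasDerivAt)
    have := h1.inner ℝ h2
    simpa [add_comm] using this
  have hintΦ : ∫ t in (0:ℝ)..T,
      (⟪deriv (ψ i) t, y t - xstar t⟫ + ⟪ψ i t, deriv y t - deriv xstar t⟫)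
      = ⟪ψ i T, y T - xstar T⟫ - ⟪ψ i 0, y 0 - xstar 0⟫ :=
    intervalIntegral.integral_eq_sub_of_hasDerivAt hΦderiv (hΦ'cont.intervalIntegrable 0 T)
  have hmono := intervalIntegral.integral_mono_on (μ := MeasureTheory.volume) hT.le
    (hcg_star.intervalIntegrable 0 T) ((hcg_y.add hΦ'cont).intervalIntegrable 0 T) key
  simp only [Pi.add_apply] at hmono
  rw [intervalIntegral.integral_add (hcg_y.intervalIntegrable 0 T)
    (hΦ'cont.intervalIntegrable 0 T), hintΦ] at hmono
  have hΦ0 : ⟪ψ i 0, y 0 - xstar 0⟫ = 0 := by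
    rw [hy0, hx0, sub_self, inner_zero_right]
  -- terminal term via convexity of h i
  have hterm : h i (xstar T) + ⟪ψ i T, y T - xstar T⟫ ≤ h i (y T) := by
    have hgradh : HasGradientAt (h i) (gradient (h i) (xstar T)) (xstar T) :=
      (((hh i).differentiable one_ne_zero) (xstar T)).hasGradientAt
    rw [htrans i]
    exact subgrad_gradient (hconv_h i) hgradh
  rw [hJ, hJ]
  have hupd : ∀ t : ℝ, (Function.update ustar i ui) i t = ui t := by
    intro t; rw [Function.update_self]
  simp only [hupd]
  rw [hΦ0, sub_zero] at hmono
  linarith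
end
end

section
/- Assume: (a) the observed trajectories (x̃, ũ) constitute an open-loop Nash equilibrium of the differential game with running costs θ_i*ᵀφ_i(x,u) for parameters θ_i* ∈ ℝ^{M_i} with first component θ*_{i,1} > 0, and ψ_i* are corresponding C¹ costates satisfying, for all t ∈ [0,T], ∇_{u_i}H_i(θ_i*; ψ_i*(t), x̃(t), ũ(t)) = 0 and ψ̇_i*(t) = −∇_x H_i(θ_i*; ψ_i*(t), x̃(t), ũ(t)); (b) P_i(0) is the value at 0 of the C¹ solution of the Riccati equation Ṗ_i = (P_iB_i + N_i)(P_iB_i + N_i)ᵀ − F_iᵀF_i with P_i(T) = 0, and P̄_i denotes P_i(0) with its first row and first column deleted; (c) for each i, either P̄_i has full rank M_i + n − 1, or every v ∈ ℝ^{M_i+n−1} with P̄_i v = 0 has its first M_i − 1 components equal to zero. Then for each i, every minimizer α̂_i = (θ̂_i, ψ̂_{i,0}) of α ↦ αᵀP_i(0)α over {α ∈ ℝ^{M_i+n} : α₁ = 1} satisfies θ̂_i = c_i θ_i* for some c_i > 0; consequently (x̃, ũ) is also an open-loop Nash equilibrium of the game with running costs θ̂_iᵀφ_i, i.e. the trajectory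 error of θ̂ = (θ̂_1,…,θ̂_N) is zero. -/
open scoped RealInnerProductSpace
open Set Matrix

noncomputable section

/-- If a quadratic `c t² + b t` is nonnegative for all `t`, its linear coefficient vanishes. -/
private lemma quad_linear_zero (b c : ℝ) (h : ∀ t : ℝ, 0 ≤ c * t ^ 2 + b * t) : b = 0 := by
  have key : ∀ t : ℝ, 0 < t → b ≤ c * t ∧ -(c * t) ≤ b := by
    intro t ht
    constructor
    · have h1 := h (-t); nlinarith
    · have h2 := h t; nlinarith
  rcases le_or_gt c 0 with hc | hc
  · have h1 := key 1 one_pos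
    simp only [mul_one] at h1
    linarith
  · rcases lt_trichotomy b 0 with hb | hb | hb
    · have h1 := (key (-b / (2 * c)) (div_pos (by linarith) (by linarith))).2
      have : -(c * (-b / (2 * c))) = b / 2 := by field_simp
      rw [this] at h1; linarith
    · exact hb
    · have h1 := (key (b / (2 * c)) (div_pos (by linarith) (by linarith))).1
      have : c * (b / (2 * c)) = b / 2 := by field_simp
      rw [this] at h1; linarith

private lemma inner_single_right' {p : ℕ} (x : EuclideanSpace ℝ (Fin p)) (k : Fin p) :
    ⟪x, EuclideanSpace.single k 1⟫ = x k := by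
  simp [PiLp.inner_apply, EuclideanSpace.single_apply]

private lemma inner_toEuclideanLin_single' {p q : ℕ} (A : Matrix (Fin p) (Fin q) ℝ)
    (θ : EuclideanSpace ℝ (Fin p)) (k : Fin q) :
    ⟪θ, (LinearMap.toContinuousLinearMap (Matrix.toEuclideanLin A)) (EuclideanSpace.single k 1)⟫
      = (Aᵀ *ᵥ (fun j => θ j)) k := by
  simp [PiLp.inner_apply, Matrix.toEuclideanLin_apply, Matrix.mulVec, dotProduct,
    EuclideanSpace.single_apply,
    mul_ite, Finset.sum_ite_eq, mul_comm]

/-- Gradient of `y ↦ ⟪θ, φf y⟫ + ⟪ψ, ff y⟫` when the Fréchet derivatives of `φf, ff` are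
given by matrices. -/
private lemma gradient_two_inner {nn p r : ℕ}
    {φf : EuclideanSpace ℝ (Fin nn) → EuclideanSpace ℝ (Fin p)}
    {ff : EuclideanSpace ℝ (Fin nn) → EuclideanSpace ℝ (Fin r)}
    {A : Matrix (Fin p) (Fin nn) ℝ} {Bm : Matrix (Fin r) (Fin nn) ℝ}
    {x : EuclideanSpace ℝ (Fin nn)} (θ : EuclideanSpace ℝ (Fin p)) (ψ : EuclideanSpace ℝ (Fin r))
    (hA : HasFDerivAt φf (LinearMap.toContinuousLinearMap (Matrix.toEuclideanLin A)) x)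
    (hB : HasFDerivAt ff (LinearMap.toContinuousLinearMap (Matrix.toEuclideanLin Bm)) x) :
    ∀ k, gradient (fun y => ⟪θ, φf y⟫ + ⟪ψ, ff y⟫) x k
      = (Aᵀ *ᵥ (fun j => θ j) + Bmᵀ *ᵥ (fun j => ψ j)) k := by
  intro k
  set CA := LinearMap.toContinuousLinearMap (Matrix.toEuclideanLin A)
  set CB := LinearMap.toContinuousLinearMap (Matrix.toEuclideanLin Bm)
  have hD : HasFDerivAt (fun y => ⟪θ, φf y⟫ + ⟪ψ, ff y⟫)
      ((innerSL ℝ θ).comp CA + (innerSL ℝ ψ).comp CB) x := by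
    have h1 : HasFDerivAt (fun y => ⟪θ, φf y⟫) ((innerSL ℝ θ).comp CA) x :=
      (innerSL ℝ θ).hasFDerivAt.comp x hA
    have h2 : HasFDerivAt (fun y => ⟪ψ, ff y⟫) ((innerSL ℝ ψ).comp CB) x :=
      (innerSL ℝ ψ).hasFDerivAt.comp x hB
    exact h1.add h2
  have hg := (hasFDerivAt_iff_hasGradientAt.mp hD).gradient
  rw [hg]
  have h3 : ((InnerProductSpace.toDual ℝ _).symm ((innerSL ℝ θ).comp CA + (innerSL ℝ ψ).comp CB)) k
      = ⟪((InnerProductSpace.toDual ℝ _).symm ((innerSL ℝ θ).comp CA + (innerSL ℝ ψ).comp CB)),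
          EuclideanSpace.single k 1⟫ := (inner_single_right' _ k).symm
  rw [h3, InnerProductSpace.toDual_symm_apply]
  have h4 : ((innerSL ℝ θ).comp CA + (innerSL ℝ ψ).comp CB) (EuclideanSpace.single k 1)
      = ⟪θ, CA (EuclideanSpace.single k 1)⟫ + ⟪ψ, CB (EuclideanSpace.single k 1)⟫ := rfl
  rw [h4, inner_toEuclideanLin_single', inner_toEuclideanLin_single']
  simp [Pi.add_apply]

/-- A solution of a backward linear ODE vanishing at the endpoint vanishes at `0`. -/
private lemma backward_linear_vanish {ι : Type*} [Fintype ι] [DecidableEq ι] {T : ℝ}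
    (hT : 0 < T) (K : ℝ → Matrix ι ι ℝ)
    (hK : ∀ a b, ContinuousOn (fun t => K t a b) (Icc 0 T))
    (y : ℝ → ι → ℝ) (hy : ContinuousOn y (Icc 0 T))
    (hyd : ∀ t ∈ Icc (0:ℝ) T, HasDerivWithinAt y (K t *ᵥ y t) (Icc 0 T) t)
    (hyT : y T = 0) : y 0 = 0 := by
  set g : ℝ → ℝ := fun t => ∑ a : ι, ∑ b : ι, |K t a b| with hg
  have hgc : ContinuousOn g (Icc 0 T) := by
    apply continuousOn_finset_sum; intro a _
    apply continuousOn_finset_sum; intro b _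
    exact ContinuousOn.abs (hK a b)
  obtain ⟨C, hC⟩ := isCompact_Icc.exists_bound_of_continuousOn hgc
  have hC0 : 0 ≤ C := by
    have h0 := hC 0 ⟨le_rfl, hT.le⟩
    have hg0 : 0 ≤ g 0 := Finset.sum_nonneg fun a _ => Finset.sum_nonneg fun b _ => abs_nonneg _
    calc (0:ℝ) ≤ g 0 := hg0
      _ ≤ ‖g 0‖ := le_abs_self _
      _ ≤ C := h0
  have hbound : ∀ t ∈ Icc (0:ℝ) T, ∀ w : ι → ℝ, ‖K t *ᵥ w‖ ≤ C * ‖w‖ := by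
    intro t ht w
    rw [pi_norm_le_iff_of_nonneg (by positivity)]
    intro a
    have h1 : ‖(K t *ᵥ w) a‖ ≤ (∑ b : ι, |K t a b|) * ‖w‖ := by
      rw [Matrix.mulVec, dotProduct]
      calc ‖∑ b : ι, K t a b * w b‖ ≤ ∑ b : ι, ‖K t a b * w b‖ := norm_sum_le _ _
        _ ≤ ∑ b : ι, |K t a b| * ‖w‖ := by
            apply Finset.sum_le_sum; intro b _
            rw [norm_mul]
            exact mul_le_mul_of_nonneg_left (norm_le_pi_norm w b) (abs_nonneg _)
        _ = (∑ b : ι, |K t a b|) * ‖w‖ := by rw [Finset.sum_mul]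
    refine h1.trans (mul_le_mul_of_nonneg_right ?_ (norm_nonneg _))
    calc (∑ b : ι, |K t a b|) ≤ g t :=
          Finset.single_le_sum (f := fun a => ∑ b : ι, |K t a b|)
            (fun a _ => Finset.sum_nonneg fun b _ => abs_nonneg _) (Finset.mem_univ a)
      _ ≤ ‖g t‖ := le_abs_self _
      _ ≤ C := hC t ht
  set z : ℝ → ι → ℝ := fun s => y (T - s) with hz
  have hmaps : MapsTo (fun s : ℝ => T - s) (Icc 0 T) (Icc 0 T) := by
    intro s hs
    simp only [mem_Icc] at hs ⊢
    constructor <;> linarith [hs.1, hs.2]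
  have hzc : ContinuousOn z (Icc 0 T) :=
    hy.comp ((continuous_const.sub continuous_id).continuousOn) hmaps
  have hzd : ∀ s ∈ Ico (0:ℝ) T,
      HasDerivWithinAt z ((-1 : ℝ) • (K (T - s) *ᵥ y (T - s))) (Ici s) s := by
    intro s hs
    have hs' : T - s ∈ Icc (0:ℝ) T := ⟨by linarith [hs.2], by linarith [hs.1]⟩
    have h1 : HasDerivWithinAt (fun s : ℝ => T - s) (-1 : ℝ) (Icc 0 T) s :=
      (hasDerivWithinAt_id s _).const_sub T
    have h2 := (hyd (T - s) hs').scomp s h1 hmaps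
    exact h2.mono_of_mem_nhdsWithin (Icc_mem_nhdsGE_of_mem ⟨hs.1, hs.2⟩)
  have hz0 : ‖z 0‖ ≤ 0 := by simp [hz, hyT]
  have hb2 : ∀ s ∈ Ico (0:ℝ) T, ‖(-1 : ℝ) • (K (T - s) *ᵥ y (T - s))‖ ≤ C * ‖z s‖ + 0 := by
    intro s hs
    have hs' : T - s ∈ Icc (0:ℝ) T := ⟨by linarith [hs.2], by linarith [hs.1]⟩
    rw [norm_smul, add_zero]
    simpa using hbound (T - s) hs' (y (T - s))
  have hfin := norm_le_gronwallBound_of_norm_deriv_right_le hzc hzd hz0 hb2 T ⟨hT.le, le_rfl⟩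
  rw [gronwallBound_ε0_δ0] at hfin
  have hz0' : z T = 0 := norm_le_zero_iff.mp hfin
  simpa [hz] using hz0'

/-- Symmetry and a kernel vector of the Riccati solution. -/
private lemma riccati_kernel {ι κ κ' : Type*} [Fintype ι] [DecidableEq ι] [Fintype κ]
    [Fintype κ'] {T : ℝ} (hT : 0 < T)
    (Nq : ℝ → Matrix ι κ' ℝ) (hNc : ∀ a b, Continuous fun t => Nq t a b)
    (B : Matrix ι κ' ℝ) (F : ℝ → Matrix κ ι ℝ)
    (P : ℝ → Matrix ι ι ℝ)
    (v : ℝ → ι → ℝ) (hvc : ∀ b, Continuous fun s => v s b)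
    (hvd : ∀ t ∈ Icc (0:ℝ) T, ∀ b, HasDerivAt (fun s => v s b)
      ((B *ᵥ (-((Nq t)ᵀ *ᵥ v t))) b) t)
    (hFF : ∀ t ∈ Icc (0:ℝ) T, ((F t)ᵀ * F t) *ᵥ v t = (Nq t * (Nq t)ᵀ) *ᵥ v t)
    (hP : ∀ t ∈ Icc (0:ℝ) T, ∀ a b, HasDerivWithinAt (fun s => P s a b)
      (((P t * B + Nq t) * (P t * B + Nq t)ᵀ - (F t)ᵀ * F t) a b) (Icc (0:ℝ) T) t)
    (hPT : P T = 0) :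
    (∀ t ∈ Icc (0:ℝ) T, ∀ a b, P t a b = P t b a) ∧ P 0 *ᵥ v 0 = 0 := by
  have hsymm : ∀ t ∈ Icc (0:ℝ) T, ∀ a b, P t a b = P t b a := by
    intro t ht a b
    have hR : ∀ s, ((P s * B + Nq s) * (P s * B + Nq s)ᵀ - (F s)ᵀ * F s) a b
        = ((P s * B + Nq s) * (P s * B + Nq s)ᵀ - (F s)ᵀ * F s) b a := by
      intro s
      simp only [Matrix.sub_apply, Matrix.mul_apply, Matrix.transpose_apply]
      congr 1
      · exact Finset.sum_congr rfl fun k _ => mul_comm _ _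
      · exact Finset.sum_congr rfl fun k _ => mul_comm _ _
    have hdd : ∀ s ∈ Icc (0:ℝ) T,
        HasDerivWithinAt (fun s' => P s' a b - P s' b a) 0 (Icc (0:ℝ) T) s := by
      intro s hs
      have h1 := (hP s hs a b).sub (hP s hs b a)
      rw [hR s, sub_self] at h1
      exact h1
    have hcont : ContinuousOn (fun s' => P s' a b - P s' b a) (Icc t T) := fun s hs =>
      ((hdd s ⟨ht.1.trans hs.1, hs.2⟩).continuousWithinAt).mono (Icc_subset_Icc ht.1 le_rfl)
    have hderiv : ∀ s ∈ Ico t T, HasDerivWithinAt (fun s' => P s' a b - P s' b a) 0 (Ici s) s :=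
      fun s hs => (hdd s ⟨ht.1.trans hs.1, hs.2.le⟩).mono_of_mem_nhdsWithin
        (Icc_mem_nhdsGE_of_mem ⟨ht.1.trans hs.1, hs.2⟩)
    have h2 := constant_of_has_deriv_right_zero hcont hderiv T ⟨ht.2, le_rfl⟩
    simp only [hPT, Matrix.zero_apply, sub_self] at h2
    linarith [h2]
  have hPc : ∀ a c, ContinuousOn (fun t => P t a c) (Icc (0:ℝ) T) := fun a c t ht =>
    (hP t ht a c).continuousWithinAt
  have hKc : ∀ a b, ContinuousOn (fun t => ((P t * B + Nq t) * Bᵀ) a b) (Icc (0:ℝ) T) := by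
    intro a b
    simp only [Matrix.mul_apply, Matrix.add_apply, Matrix.transpose_apply]
    apply continuousOn_finset_sum; intro c _
    apply ContinuousOn.mul
    · apply ContinuousOn.add
      · apply continuousOn_finset_sum; intro d _
        exact (hPc a d).mul continuousOn_const
      · exact (hNc a c).continuousOn
    · exact continuousOn_const
  have hyc : ContinuousOn (fun t => P t *ᵥ v t) (Icc (0:ℝ) T) := by
    rw [continuousOn_pi]
    intro a
    show ContinuousOn (fun t => ∑ b, P t a b * v t b) (Icc (0:ℝ) T)
    apply continuousOn_finset_sum; intro b _
    exact (hPc a b).mul ((hvc b).continuousOn)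
  have hyd : ∀ t ∈ Icc (0:ℝ) T, HasDerivWithinAt (fun t => P t *ᵥ v t)
      (((P t * B + Nq t) * Bᵀ) *ᵥ (P t *ᵥ v t)) (Icc (0:ℝ) T) t := by
    intro t ht
    have hvec : ((P t * B + Nq t) * (P t * B + Nq t)ᵀ - (F t)ᵀ * F t) *ᵥ v t
        + P t *ᵥ (B *ᵥ (-((Nq t)ᵀ *ᵥ v t)))
        = ((P t * B + Nq t) * Bᵀ) *ᵥ (P t *ᵥ v t) := by
      have hsymmM : (P t)ᵀ = P t := Matrix.ext fun a b => hsymm t ht b a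
      rw [Matrix.transpose_add, Matrix.transpose_mul, hsymmM, Matrix.sub_mulVec, hFF t ht]
      simp only [Matrix.mulVec_neg, Matrix.mulVec_mulVec]
      have habel : ∀ (A1 A2 A3 : Matrix ι ι ℝ),
          A1 *ᵥ v t - A2 *ᵥ v t + -(A3 *ᵥ v t) = (A1 - A2 - A3) *ᵥ v t := by
        intro A1 A2 A3
        rw [Matrix.sub_mulVec, Matrix.sub_mulVec]
        abel
      rw [habel]
      have hmat : (P t * B + Nq t) * (Bᵀ * P t + (Nq t)ᵀ) - Nq t * (Nq t)ᵀ - P t * (B * (Nq t)ᵀ)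
          = (P t * B + Nq t) * Bᵀ * P t := by
        simp only [Matrix.mul_add, Matrix.add_mul, Matrix.mul_assoc]
        abel
      rw [hmat]
    rw [hasDerivWithinAt_pi]
    intro a
    have hsum : HasDerivWithinAt (fun s => ∑ b, P s a b * v s b)
        (∑ b, (((P t * B + Nq t) * (P t * B + Nq t)ᵀ - (F t)ᵀ * F t) a b * v t b
          + P t a b * (B *ᵥ (-((Nq t)ᵀ *ᵥ v t))) b)) (Icc (0:ℝ) T) t :=
      HasDerivWithinAt.fun_sum fun b _ => (hP t ht a b).mul ((hvd t ht b).hasDerivWithinAt)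
    have hfin : (∑ b, (((P t * B + Nq t) * (P t * B + Nq t)ᵀ - (F t)ᵀ * F t) a b * v t b
          + P t a b * (B *ᵥ (-((Nq t)ᵀ *ᵥ v t))) b))
        = (((P t * B + Nq t) * Bᵀ) *ᵥ (P t *ᵥ v t)) a := by
      rw [Finset.sum_add_distrib]
      exact congrFun hvec a
    rw [hfin] at hsum
    exact hsum
  have hyT : (fun t => P t *ᵥ v t) T = 0 := by simp [hPT]
  exact ⟨hsymm, backward_linear_vanish hT (fun t => (P t * B + Nq t) * Bᵀ) hKc
    (fun t => P t *ᵥ v t) hyc hyd hyT⟩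

/-- Analysis of the minimizers of the quadratic form. -/
private lemma minimizer_prop {Mi nn : ℕ} (hMi : 0 < Mi)
    (P0 : Matrix (Fin Mi ⊕ Fin nn) (Fin Mi ⊕ Fin nn) ℝ)
    (hsym : ∀ a b, P0 a b = P0 b a)
    (θf : Fin Mi → ℝ) (ψf0 : Fin nn → ℝ) (hθ1 : 0 < θf ⟨0, hMi⟩)
    (hker : P0 *ᵥ (Sum.elim θf ψf0) = 0)
    (θhf : Fin Mi → ℝ) (ψ0f : Fin nn → ℝ)
    (h1 : Sum.elim θhf ψ0f (Sum.inl ⟨0, hMi⟩) = 1)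
    (h2 : ∀ β : Fin Mi ⊕ Fin nn → ℝ, β (Sum.inl ⟨0, hMi⟩) = 1 →
      (Sum.elim θhf ψ0f) ⬝ᵥ (P0 *ᵥ (Sum.elim θhf ψ0f)) ≤ β ⬝ᵥ (P0 *ᵥ β))
    (hrank : (∀ v : Fin Mi ⊕ Fin nn → ℝ, v (Sum.inl ⟨0, hMi⟩) = 0 →
        (∀ a, a ≠ Sum.inl ⟨0, hMi⟩ → (P0 *ᵥ v) a = 0) → v = 0) ∨
      (∀ v : Fin Mi ⊕ Fin nn → ℝ, v (Sum.inl ⟨0, hMi⟩) = 0 →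
        (∀ a, a ≠ Sum.inl ⟨0, hMi⟩ → (P0 *ᵥ v) a = 0) →
        ∀ j : Fin Mi, j ≠ ⟨0, hMi⟩ → v (Sum.inl j) = 0)) :
    ∀ j, θhf j = (θf ⟨0, hMi⟩)⁻¹ * θf j := by
  set αh := Sum.elim θhf ψ0f with hαh
  have hfoc : ∀ a, a ≠ Sum.inl ⟨0, hMi⟩ → (P0 *ᵥ αh) a = 0 := by
    intro a ha
    set e : Fin Mi ⊕ Fin nn → ℝ := Pi.single a 1 with he
    have hq : ∀ t : ℝ, 0 ≤ (P0 a a) * t ^ 2 + (2 * (P0 *ᵥ αh) a) * t := by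
      intro t
      have hβ1 : (αh + t • e) (Sum.inl ⟨0, hMi⟩) = 1 := by
        rw [Pi.add_apply, Pi.smul_apply, he, Pi.single_eq_of_ne (Ne.symm ha), smul_zero, add_zero]
        exact h1
      have hle := h2 _ hβ1
      have e1 : e ⬝ᵥ (P0 *ᵥ αh) = (P0 *ᵥ αh) a := by
        rw [he, single_dotProduct, one_mul]
      have e2 : αh ⬝ᵥ (P0 *ᵥ e) = (P0 *ᵥ αh) a := by
        rw [he, Matrix.mulVec_single]
        show (∑ x, αh x * (P0 x a * 1)) = ∑ x, P0 a x * αh x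
        exact Finset.sum_congr rfl fun x _ => by rw [hsym a x]; ring
      have e3 : e ⬝ᵥ (P0 *ᵥ e) = P0 a a := by
        rw [he, Matrix.mulVec_single, single_dotProduct]
        simp
      have hexp : (αh + t • e) ⬝ᵥ (P0 *ᵥ (αh + t • e))
          = αh ⬝ᵥ (P0 *ᵥ αh) + ((P0 a a) * t ^ 2 + (2 * (P0 *ᵥ αh) a) * t) := by
        simp only [Matrix.mulVec_add, Matrix.mulVec_smul, add_dotProduct,
          dotProduct_add, smul_dotProduct, dotProduct_smul,
          smul_eq_mul, e1, e2, e3]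
        ring
      rw [hexp] at hle
      linarith
    have := quad_linear_zero _ _ hq
    linarith
  set w : Fin Mi ⊕ Fin nn → ℝ := fun x => αh x - (θf ⟨0, hMi⟩)⁻¹ * Sum.elim θf ψf0 x with hw
  have hw1 : w (Sum.inl ⟨0, hMi⟩) = 0 := by
    show αh (Sum.inl ⟨0, hMi⟩) - (θf ⟨0, hMi⟩)⁻¹ * θf ⟨0, hMi⟩ = 0
    rw [h1, inv_mul_cancel₀ (ne_of_gt hθ1)]
    ring
  have hw2 : ∀ a, a ≠ Sum.inl ⟨0, hMi⟩ → (P0 *ᵥ w) a = 0 := by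
    intro a ha
    have hw' : w = αh - (θf ⟨0, hMi⟩)⁻¹ • Sum.elim θf ψf0 := rfl
    rw [hw', Matrix.mulVec_sub, Matrix.mulVec_smul, hker]
    simp [hfoc a ha]
  have hwz : ∀ j : Fin Mi, w (Sum.inl j) = 0 := by
    rcases hrank with hr | hr
    · intro j
      rw [hr w hw1 hw2]
      rfl
    · intro j
      by_cases hj : j = ⟨0, hMi⟩
      · rw [hj]; exact hw1
      · exact hr w hw1 hw2 j hj
  intro j
  have h3 : θhf j - (θf ⟨0, hMi⟩)⁻¹ * θf j = 0 := hwz j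
  linarith
theorem statement_4
    (n N : ℕ) (m : Fin N → ℕ) (M : Fin N → ℕ) (hM : ∀ i, 0 < M i)
    (T : ℝ) (hT : 0 < T)
    (x₀ : EuclideanSpace ℝ (Fin n))
    -- input-affine dynamics f(x,u) = fx(x) + ∑ i, G i x (u i)
    (fx : EuclideanSpace ℝ (Fin n) → EuclideanSpace ℝ (Fin n))
    (hfx : ContDiff ℝ 1 fx)
    (G : (i : Fin N) → EuclideanSpace ℝ (Fin n) →
      (EuclideanSpace ℝ (Fin (m i)) →L[ℝ] EuclideanSpace ℝ (Fin n)))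
    (hG : ∀ i, ContDiff ℝ 1 (G i))
    (f : EuclideanSpace ℝ (Fin n) → ((j : Fin N) → EuclideanSpace ℝ (Fin (m j))) →
      EuclideanSpace ℝ (Fin n))
    (hf : ∀ x u, f x u = fx x + ∑ i, G i x (u i))
    -- basis functions
    (φ : (i : Fin N) → EuclideanSpace ℝ (Fin n) →
      ((j : Fin N) → EuclideanSpace ℝ (Fin (m j))) → EuclideanSpace ℝ (Fin (M i)))
    (hφ : ∀ i, ContDiff ℝ 1 (fun p : EuclideanSpace ℝ (Fin n) ×
      ((j : Fin N) → EuclideanSpace ℝ (Fin (m j))) => φ i p.1 p.2))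
    -- parameterized costs J i θ = ∫₀ᵀ θᵀ φᵢ(x(t),u(t)) dt
    (J : (i : Fin N) → EuclideanSpace ℝ (Fin (M i)) → (ℝ → EuclideanSpace ℝ (Fin n)) →
      ((j : Fin N) → ℝ → EuclideanSpace ℝ (Fin (m j))) → ℝ)
    (hJ : ∀ i θ x u, J i θ x u = ∫ t in (0:ℝ)..T, ⟪θ, φ i (x t) (fun j => u j t)⟫)
    -- parameterized Hamiltonians
    (H : (i : Fin N) → EuclideanSpace ℝ (Fin (M i)) → EuclideanSpace ℝ (Fin n) →
      EuclideanSpace ℝ (Fin n) → ((j : Fin N) → EuclideanSpace ℝ (Fin (m j))) → ℝ)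
    (hH : ∀ i θ ψ x u, H i θ ψ x u = ⟪θ, φ i x u⟫ + ⟪ψ, f x u⟫)
    -- the observed trajectories
    (ut : (j : Fin N) → ℝ → EuclideanSpace ℝ (Fin (m j)))
    (hut : ∀ j, Continuous (ut j))
    (xt : ℝ → EuclideanSpace ℝ (Fin n)) (hxt : ContDiff ℝ 1 xt)
    (hx0 : xt 0 = x₀)
    (hdyn : ∀ t ∈ Icc (0:ℝ) T, deriv xt t = f (xt t) (fun j => ut j t))
    -- (a) the observed trajectories are an OLNE for the parameters θ* with θ*_{i,1} > 0
    (θs : (i : Fin N) → EuclideanSpace ℝ (Fin (M i)))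
    (hθs1 : ∀ i, 0 < θs i ⟨0, hM i⟩)
    (hOLNE : ∀ i : Fin N, ∀ ui : ℝ → EuclideanSpace ℝ (Fin (m i)), Continuous ui →
      ∀ y : ℝ → EuclideanSpace ℝ (Fin n), ContDiff ℝ 1 y → y 0 = x₀ →
      (∀ t ∈ Icc (0:ℝ) T,
        deriv y t = f (y t) (Function.update (fun j => ut j t) i (ui t))) →
      J i (θs i) xt ut ≤ J i (θs i) y (Function.update ut i ui))
    -- corresponding C¹ costates satisfying stationarity and the costate equation
    (ψs : (i : Fin N) → ℝ → EuclideanSpace ℝ (Fin n))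
    (hψs : ∀ i, ContDiff ℝ 1 (ψs i))
    (hstat : ∀ i, ∀ t ∈ Icc (0:ℝ) T,
      gradient (fun v => H i (θs i) (ψs i t) (xt t) (Function.update (fun j => ut j t) i v))
        (ut i t) = 0)
    (hcostate : ∀ i, ∀ t ∈ Icc (0:ℝ) T,
      deriv (ψs i) t = - gradient (fun y => H i (θs i) (ψs i t) y (fun j => ut j t)) (xt t))
    -- Jacobian matrices along (x̃(t), ũ(t))
    (Jφx : (i : Fin N) → ℝ → Matrix (Fin (M i)) (Fin n) ℝ)
    (Jfx : ℝ → Matrix (Fin n) (Fin n) ℝ)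
    (Jφu : (i : Fin N) → ℝ → Matrix (Fin (M i)) (Fin (m i)) ℝ)
    (Jfu : (i : Fin N) → ℝ → Matrix (Fin n) (Fin (m i)) ℝ)
    (hJφx : ∀ i t, HasFDerivAt (fun y => φ i y (fun j => ut j t))
      (LinearMap.toContinuousLinearMap (Matrix.toEuclideanLin (Jφx i t))) (xt t))
    (hJfx : ∀ t, HasFDerivAt (fun y => f y (fun j => ut j t))
      (LinearMap.toContinuousLinearMap (Matrix.toEuclideanLin (Jfx t))) (xt t))
    (hJφu : ∀ i t, HasFDerivAt
      (fun v => φ i (xt t) (Function.update (fun j => ut j t) i v))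
      (LinearMap.toContinuousLinearMap (Matrix.toEuclideanLin (Jφu i t))) (ut i t))
    (hJfu : ∀ i t, HasFDerivAt
      (fun v => f (xt t) (Function.update (fun j => ut j t) i v))
      (LinearMap.toContinuousLinearMap (Matrix.toEuclideanLin (Jfu i t))) (ut i t))
    (hJφxc : ∀ i, Continuous (Jφx i)) (hJfxc : Continuous Jfx)
    (hJφuc : ∀ i, Continuous (Jφu i)) (hJfuc : ∀ i, Continuous (Jfu i))
    -- block matrices Nᵢ(t), Bᵢ, Fᵢ(t)
    (Nq : (i : Fin N) → ℝ → Matrix (Fin (M i) ⊕ Fin n) (Fin n) ℝ)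
    (hNq : ∀ i t, Nq i t = Matrix.fromRows (Jφx i t) (Jfx t))
    (B : (i : Fin N) → Matrix (Fin (M i) ⊕ Fin n) (Fin n) ℝ)
    (hB : ∀ i, B i = Matrix.fromRows 0 1)
    (F : (i : Fin N) → ℝ → Matrix (Fin n ⊕ Fin (m i)) (Fin (M i) ⊕ Fin n) ℝ)
    (hF : ∀ i t, F i t = Matrix.fromRows
      (Matrix.fromCols (Jφx i t)ᵀ (Jfx t)ᵀ)
      (Matrix.fromCols (Jφu i t)ᵀ (Jfu i t)ᵀ))
    -- (b) C¹ solutions of the Riccati differential equation on [0,T] with Pᵢ(T) = 0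
    (P : (i : Fin N) → ℝ → Matrix (Fin (M i) ⊕ Fin n) (Fin (M i) ⊕ Fin n) ℝ)
    (hP : ∀ i, ∀ t ∈ Icc (0:ℝ) T, ∀ a b, HasDerivWithinAt (fun s => P i s a b)
      (((P i t * B i + Nq i t) * (P i t * B i + Nq i t)ᵀ - (F i t)ᵀ * F i t) a b)
      (Icc (0:ℝ) T) t)
    (hPT : ∀ i, P i T = 0)
    -- (c) for each i: either P̄ᵢ has full rank, or every kernel vector of P̄ᵢ has its first
    -- Mᵢ−1 components equal to zero (P̄ᵢ realized via extension by zero at the first index)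
    (hrank : ∀ i,
      (∀ v : Fin (M i) ⊕ Fin n → ℝ, v (Sum.inl ⟨0, hM i⟩) = 0 →
        (∀ a, a ≠ Sum.inl ⟨0, hM i⟩ → (P i 0 *ᵥ v) a = 0) → v = 0) ∨
      (∀ v : Fin (M i) ⊕ Fin n → ℝ, v (Sum.inl ⟨0, hM i⟩) = 0 →
        (∀ a, a ≠ Sum.inl ⟨0, hM i⟩ → (P i 0 *ᵥ v) a = 0) →
        ∀ j : Fin (M i), j ≠ ⟨0, hM i⟩ → v (Sum.inl j) = 0)) :
    -- conclusion
    ∀ (θh : (i : Fin N) → EuclideanSpace ℝ (Fin (M i))) (ψ0 : (i : Fin N) → Fin n → ℝ),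
      (∀ i, Sum.elim (fun j => θh i j) (ψ0 i) (Sum.inl ⟨0, hM i⟩) = 1 ∧
        (∀ β : Fin (M i) ⊕ Fin n → ℝ, β (Sum.inl ⟨0, hM i⟩) = 1 →
          (Sum.elim (fun j => θh i j) (ψ0 i)) ⬝ᵥ
              ((P i 0) *ᵥ (Sum.elim (fun j => θh i j) (ψ0 i))) ≤
            β ⬝ᵥ ((P i 0) *ᵥ β))) →
      -- every minimizer θ̂ᵢ is a positive multiple of θᵢ*
      (∀ i, ∃ c : ℝ, 0 < c ∧ ∀ j : Fin (M i), θh i j = c * θs i j) ∧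
      -- and (x̃,ũ) is an OLNE of the game with running costs θ̂ᵢᵀφᵢ (zero trajectory error)
      (∀ i : Fin N, ∀ ui : ℝ → EuclideanSpace ℝ (Fin (m i)), Continuous ui →
        ∀ y : ℝ → EuclideanSpace ℝ (Fin n), ContDiff ℝ 1 y → y 0 = x₀ →
        (∀ t ∈ Icc (0:ℝ) T,
          deriv y t = f (y t) (Function.update (fun j => ut j t) i (ui t))) →
        J i (θh i) xt ut ≤ J i (θh i) y (Function.update ut i ui)) := by
  intro θh ψ0 hmin
  have hIcc0 : (0:ℝ) ∈ Icc (0:ℝ) T := ⟨le_rfl, hT.le⟩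
  have key : ∀ i, ∀ j : Fin (M i), θh i j = (θs i ⟨0, hM i⟩)⁻¹ * θs i j := by
    intro i
    -- component derivatives and continuity of the costate
    have hψcomp : ∀ (l : Fin n) (s : ℝ),
        HasDerivAt (fun s' => ψs i s' l) (deriv (ψs i) s l) s := by
      intro l s
      have h1 : HasDerivAt (ψs i) (deriv (ψs i) s) s :=
        (((hψs i).differentiable one_ne_zero) s).hasDerivAt
      exact ((EuclideanSpace.proj l :
        EuclideanSpace ℝ (Fin n) →L[ℝ] ℝ).hasFDerivAt).comp_hasDerivAt s h1
    have hψl : ∀ l : Fin n, Continuous fun s => ψs i s l := fun l =>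
      continuous_iff_continuousAt.2 fun s => (hψcomp l s).differentiableAt.continuousAt
    -- stationarity in matrix form
    have hstat' : ∀ t ∈ Icc (0:ℝ) T,
        (Jφu i t)ᵀ *ᵥ (fun j => θs i j) + (Jfu i t)ᵀ *ᵥ (fun l => ψs i t l) = 0 := by
      intro t ht
      have heq : (fun v => H i (θs i) (ψs i t) (xt t) (Function.update (fun j => ut j t) i v))
          = fun v => ⟪θs i, φ i (xt t) (Function.update (fun j => ut j t) i v)⟫
            + ⟪ψs i t, f (xt t) (Function.update (fun j => ut j t) i v)⟫ :=
        funext fun v => hH i (θs i) (ψs i t) (xt t) _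
      have h0 := hstat i t ht
      rw [heq] at h0
      funext k
      have h1 := gradient_two_inner (θs i) (ψs i t) (hJφu i t) (hJfu i t) k
      rw [h0] at h1
      have h2 : (0 : EuclideanSpace ℝ (Fin (m i))) k = 0 := rfl
      rw [h2] at h1
      exact h1.symm
    -- costate equation in matrix form
    have hcost' : ∀ t ∈ Icc (0:ℝ) T, ∀ l : Fin n,
        deriv (ψs i) t l
          = -(((Jφx i t)ᵀ *ᵥ (fun j => θs i j) + (Jfx t)ᵀ *ᵥ (fun l => ψs i t l)) l) := by
      intro t ht l
      have heq : (fun y => H i (θs i) (ψs i t) y (fun j => ut j t))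
          = fun y => ⟪θs i, φ i y (fun j => ut j t)⟫ + ⟪ψs i t, f y (fun j => ut j t)⟫ :=
        funext fun y => hH i (θs i) (ψs i t) y _
      have h0 := hcostate i t ht
      rw [heq] at h0
      have h1 := gradient_two_inner (θs i) (ψs i t) (hJφx i t) (hJfx t) l
      have h2 : deriv (ψs i) t l
          = -(gradient (fun y => ⟪θs i, φ i y (fun j => ut j t)⟫
              + ⟪ψs i t, f y (fun j => ut j t)⟫) (xt t) l) := by
        rw [h0]; rfl
      rw [h2, h1]
    -- continuity of the entries of Nq
    have hNc : ∀ a b, Continuous fun t => Nq i t a b := by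
      intro a b
      have hfun : (fun t => Nq i t a b) = fun t => Matrix.fromRows (Jφx i t) (Jfx t) a b := by
        funext t; rw [hNq i t]
      rw [hfun]
      cases a with
      | inl j =>
        simp only [Matrix.fromRows_apply_inl]
        exact (hJφxc i).matrix_elem j b
      | inr l =>
        simp only [Matrix.fromRows_apply_inr]
        exact hJfxc.matrix_elem l b
    -- the candidate kernel vector
    have hvc : ∀ b : Fin (M i) ⊕ Fin n,
        Continuous fun s => Sum.elim (fun j => θs i j) (fun l => ψs i s l) b := by
      intro b
      cases b with
      | inl j => exact continuous_const
      | inr l => exact hψl l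
    have hvd : ∀ t ∈ Icc (0:ℝ) T, ∀ b : Fin (M i) ⊕ Fin n,
        HasDerivAt (fun s => Sum.elim (fun j => θs i j) (fun l => ψs i s l) b)
          ((B i *ᵥ (-((Nq i t)ᵀ *ᵥ Sum.elim (fun j => θs i j) (fun l => ψs i t l)))) b) t := by
      intro t ht b
      have hq : (B i *ᵥ (-((Nq i t)ᵀ *ᵥ Sum.elim (fun j => θs i j) (fun l => ψs i t l))))
          = Sum.elim (0 : Fin (M i) → ℝ)
              (-((Jφx i t)ᵀ *ᵥ (fun j => θs i j) + (Jfx t)ᵀ *ᵥ (fun l => ψs i t l))) := by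
        rw [hNq i t, Matrix.transpose_fromRows, Matrix.fromCols_mulVec_sumElim,
          hB i, Matrix.fromRows_mulVec, Matrix.zero_mulVec, Matrix.one_mulVec]
      rw [hq]
      cases b with
      | inl j => exact hasDerivAt_const t ((fun j => θs i j) j)
      | inr l =>
        have h1 := hψcomp l t
        rw [hcost' t ht l] at h1
        exact h1
    have hFF : ∀ t ∈ Icc (0:ℝ) T,
        ((F i t)ᵀ * F i t) *ᵥ Sum.elim (fun j => θs i j) (fun l => ψs i t l)
          = (Nq i t * (Nq i t)ᵀ) *ᵥ Sum.elim (fun j => θs i j) (fun l => ψs i t l) := by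
      intro t ht
      rw [← Matrix.mulVec_mulVec, ← Matrix.mulVec_mulVec]
      have hU : (Matrix.fromCols (Jφu i t)ᵀ (Jfu i t)ᵀ) *ᵥ
          Sum.elim (fun j => θs i j) (fun l => ψs i t l) = 0 := by
        rw [Matrix.fromCols_mulVec_sumElim]
        exact hstat' t ht
      have hFv : F i t *ᵥ Sum.elim (fun j => θs i j) (fun l => ψs i t l)
          = Sum.elim ((Nq i t)ᵀ *ᵥ Sum.elim (fun j => θs i j) (fun l => ψs i t l)) 0 := by
        rw [hF i t, Matrix.fromRows_mulVec, hU, hNq i t, Matrix.transpose_fromRows]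
      rw [hFv, hF i t, Matrix.transpose_fromRows, Matrix.fromCols_mulVec_sumElim,
        Matrix.mulVec_zero, add_zero, Matrix.transpose_fromCols, Matrix.transpose_transpose,
        Matrix.transpose_transpose, ← hNq i t]
    -- apply the Riccati kernel lemma
    obtain ⟨hsymmP, hy0⟩ := riccati_kernel hT (Nq i) hNc (B i) (F i) (P i)
      (fun t => Sum.elim (fun j => θs i j) (fun l => ψs i t l)) hvc hvd hFF (hP i) (hPT i)
    obtain ⟨h1i, h2i⟩ := hmin i
    exact minimizer_prop (hM i) (P i 0) (fun a b => hsymmP 0 hIcc0 a b)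
      (fun j => θs i j) (fun l => ψs i 0 l) (hθs1 i) hy0
      (fun j => θh i j) (ψ0 i) h1i h2i (hrank i)
  constructor
  · intro i
    exact ⟨(θs i ⟨0, hM i⟩)⁻¹, inv_pos.2 (hθs1 i), key i⟩
  · intro i ui hui y hy hy0' hdyn'
    have hscale : ∀ (x : ℝ → EuclideanSpace ℝ (Fin n))
        (u : (j : Fin N) → ℝ → EuclideanSpace ℝ (Fin (m j))),
        J i (θh i) x u = (θs i ⟨0, hM i⟩)⁻¹ * J i (θs i) x u := by
      intro x u
      rw [hJ, hJ, ← intervalIntegral.integral_const_mul]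
      have hpt : ∀ t : ℝ, ⟪θh i, φ i (x t) (fun j => u j t)⟫
          = (θs i ⟨0, hM i⟩)⁻¹ * ⟪θs i, φ i (x t) (fun j => u j t)⟫ := by
        intro t
        simp only [PiLp.inner_apply, RCLike.inner_apply, conj_trivial]
        rw [Finset.mul_sum]
        exact Finset.sum_congr rfl fun j _ => by rw [key i j]; ring
      simp only [hpt]
    rw [hscale xt ut, hscale y (Function.update ut i ui)]
    exact mul_le_mul_of_nonneg_left (hOLNE i ui hui y hy hy0' hdyn')
      (inv_nonneg.2 (hθs1 i).le)
end
end

section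
/- Let P ∈ ℝ^{(M+n)×(M+n)} be symmetric positive semidefinite and let P̄ ∈ ℝ^{(M+n−1)×(M+n−1)} be P with its first row and first column deleted. Suppose every v ∈ ℝ^{M+n−1} with P̄v = 0 has its first M−1 components equal to zero. Then any two minimizers α, α' of the quadratic form α ↦ αᵀPα over the affine set {α : α₁ = 1} agree in their first M components. -/
/- STATEMENT 6: Let P ∈ ℝ^{(M+n)×(M+n)} be symmetric positive semidefinite and let P̄ be P
with its first row and column deleted (realized here via vectors v on the full index set that
vanish at the first index, with only the non-first rows of P·v required to vanish).  If every
v with P̄v = 0 has its first M−1 components equal to zero, then any two minimizers of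
α ↦ αᵀPα over {α : α₁ = 1} agree in their first M components. -/

open Matrix

noncomputable section

lemma foc {N : ℕ} (P : Matrix (Fin N) (Fin N) ℝ) (hP : P.PosSemidef)
    (z : Fin N) (α : Fin N → ℝ) (hα : α z = 1)
    (hmin : ∀ β : Fin N → ℝ, β z = 1 → α ⬝ᵥ (P *ᵥ α) ≤ β ⬝ᵥ (P *ᵥ β)) :
    ∀ j, j ≠ z → (P *ᵥ α) j = 0 := by
  intro j hj
  set c := (P *ᵥ α) j with hc
  set q := P j j with hq
  have hq0 : 0 ≤ q := by
    have := hP.dotProduct_mulVec_nonneg (Pi.single j 1)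
    simpa [mulVec_single, dotProduct_single] using this
  set t : ℝ := -c / (q + 1) with ht
  set u : Fin N → ℝ := Pi.single j 1 with hu
  have huz : u z = 0 := Pi.single_eq_of_ne (Ne.symm hj) 1
  have hβz : (α + t • u) z = 1 := by simp [hα, huz]
  have hsymm : α ⬝ᵥ (P *ᵥ u) = u ⬝ᵥ (P *ᵥ α) := by
    have hPT : Pᵀ = P := by
      ext i k; simpa using congrFun (congrFun hP.1 i) k
    rw [dotProduct_mulVec, ← mulVec_transpose, hPT, dotProduct_comm]
  have huPα : u ⬝ᵥ (P *ᵥ α) = c := by simp [hu, hc, single_dotProduct]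
  have huPu : u ⬝ᵥ (P *ᵥ u) = q := by simp [hu, hq, mulVec_single, single_dotProduct]
  have hexp : (α + t • u) ⬝ᵥ (P *ᵥ (α + t • u))
      = α ⬝ᵥ (P *ᵥ α) + 2 * t * c + t ^ 2 * q := by
    rw [mulVec_add, mulVec_smul]
    simp only [add_dotProduct, smul_dotProduct, dotProduct_add, dotProduct_smul,
      smul_eq_mul, hsymm, huPα, huPu]
    ring
  have := hmin (α + t • u) hβz
  rw [hexp] at this
  have h1 : 0 ≤ 2 * t * c + t ^ 2 * q := by linarith
  have hq1 : (0:ℝ) < q + 1 := by linarith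
  have ht' : t * (q + 1) = -c := by rw [ht]; field_simp
  have ht0 : t = 0 := by nlinarith [sq_nonneg t]
  have : -c = 0 := by rw [← ht', ht0]; ring
  linarith


theorem statement_6
    (M n : ℕ) (hM : 1 ≤ M) (hn : 1 ≤ n)
    (P : Matrix (Fin (M + n)) (Fin (M + n)) ℝ) (hP : P.PosSemidef)
    -- the first index
    (z : Fin (M + n)) (hz : z = ⟨0, by omega⟩)
    -- kernel condition on P̄ (first row/column of P deleted)
    (hker : ∀ v : Fin (M + n) → ℝ, v z = 0 → (∀ j, j ≠ z → (P *ᵥ v) j = 0) →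
      ∀ j : Fin (M + n), (j : ℕ) < M → j ≠ z → v j = 0)
    -- two minimizers over the affine set {α : α₁ = 1}
    (α α' : Fin (M + n) → ℝ) (hα : α z = 1) (hα' : α' z = 1)
    (hmin : ∀ β : Fin (M + n) → ℝ, β z = 1 → α ⬝ᵥ (P *ᵥ α) ≤ β ⬝ᵥ (P *ᵥ β))
    (hmin' : ∀ β : Fin (M + n) → ℝ, β z = 1 → α' ⬝ᵥ (P *ᵥ α') ≤ β ⬝ᵥ (P *ᵥ β)) :
    ∀ j : Fin (M + n), (j : ℕ) < M → α j = α' j := by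
  have h1 := foc P hP z α hα hmin
  have h2 := foc P hP z α' hα' hmin'
  have hv : ∀ j : Fin (M + n), (j : ℕ) < M → j ≠ z → (α - α') j = 0 := by
    apply hker
    · simp [hα, hα']
    · intro j hj
      rw [mulVec_sub]
      simp [h1 j hj, h2 j hj]
  intro j hjM
  by_cases hjz : j = z
  · rw [hjz, hα, hα']
  · have := hv j hjM hjz
    simpa [sub_eq_zero] using this
end
end
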